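/- Let n ≥ 3 and let f,g:[n]→[n] be fixed-point-free functions realized by points A_1,…,A_n in a metric space (X,d) (all pairwise distances distinct, d(A_i,A_{f(i)}) minimal and d(A_i,A_{g(i)}) maximal among distances from A_i). Then the functional graph G_f has no directed cycle of length greater than two. -/
import Mathlib


/-- If a pair `(f, g)` of fixed-point-free functions on `Fin n` (`n ≥ 3`) is realized by
points `A` in a metric space (all pairwise distances distinct, `A (f i)` nearest to `A i`,
`A (g i)` farthest from `A i`), then the functional graph of `f` has no directed cycle of
length greater than two, i.e. every periodic point of `f` satisfies `f (f i) = i`. -/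
theorem stmt0 (n : ℕ) (hn : 3 ≤ n) (f g : Fin n → Fin n)
    (hf : ∀ i, f i ≠ i) (hg : ∀ i, g i ≠ i)
    (X : Type*) [MetricSpace X] (A : Fin n → X)
    (hdist : ∀ i j s t : Fin n, i ≠ j → s ≠ t →
      ({i, j} : Finset (Fin n)) ≠ {s, t} → dist (A i) (A j) ≠ dist (A s) (A t))
    (hmin : ∀ i j : Fin n, j ≠ i → j ≠ f i → dist (A i) (A (f i)) < dist (A i) (A j))
    (hmax : ∀ i j : Fin n, j ≠ i → j ≠ g i → dist (A i) (A j) < dist (A i) (A (g i))) :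
    ∀ (i : Fin n) (k : ℕ), 0 < k → f^[k] i = i → f (f i) = i := by
  intro i k hk hki
  by_contra hne
  have hp : Function.IsPeriodicPt f k i := hki
  set x : ℕ → Fin n := fun j => f^[j] i with hx
  have hxsucc : ∀ j, x (j + 1) = f (x j) := by
    intro j; simp only [hx, Function.iterate_succ_apply']
  -- multiples of k fix i
  have hmul : ∀ m, f^[k * m] i = i := fun m => (hp.mul_const m)
  -- x (j+2) ≠ x j, else f (f i) = i
  have hx2 : ∀ j, x (j + 2) ≠ x j := by
    intro j h
    apply hne
    have ht : k * (j + 1) - j + (j + 2) = k * (j + 1) + 2 := by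
      have : j ≤ k * (j + 1) := by
        calc j ≤ j + 1 := Nat.le_succ j
        _ = 1 * (j + 1) := (one_mul _).symm
        _ ≤ k * (j + 1) := Nat.mul_le_mul_right _ hk
      omega
    have h2 : f^[k * (j + 1) - j] (x (j + 2)) = f^[k * (j + 1) - j] (x j) := by
      rw [h]
    simp only [hx, ← Function.iterate_add_apply] at h2
    rw [ht] at h2
    have hj : k * (j + 1) - j + j = k * (j + 1) := by omega
    rw [hj] at h2
    have h4 : f^[2] i = i := by
      calc f^[2] i = f^[2] (f^[k * (j + 1)] i) := by rw [hmul]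
        _ = f^[2 + k * (j + 1)] i := (Function.iterate_add_apply f 2 _ i).symm
        _ = f^[k * (j + 1) + 2] i := by rw [Nat.add_comm]
        _ = f^[k * (j + 1)] i := h2
        _ = i := hmul _
    simpa [Function.iterate_succ_apply'] using h4
  have hx1 : ∀ j, x (j + 1) ≠ x j := by
    intro j h
    exact hf (x j) (by rw [← hxsucc j, h])
  set D : ℕ → ℝ := fun j => dist (A (x j)) (A (x (j + 1))) with hD
  have hdec : ∀ j, D (j + 1) < D j := by
    intro j
    have h1 : x j ≠ x (j + 1) := fun h => hx1 j h.symm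
    have h2 : x j ≠ f (x (j + 1)) := by
      rw [← hxsucc (j + 1)]; exact fun h => hx2 j h.symm
    have := hmin (x (j + 1)) (x j) h1 h2
    calc D (j + 1) = dist (A (x (j + 1))) (A (f (x (j + 1)))) := by
          rw [hD]; simp only [hxsucc (j + 1)]
      _ < dist (A (x (j + 1))) (A (x j)) := this
      _ = D j := by rw [hD]; exact dist_comm _ _
  have hanti : StrictAnti D := strictAnti_nat_of_succ_lt hdec
  have hDk : D k = D 0 := by
    have e0 : x k = x 0 := by simpa [hx] using hki
    have e1 : x (k + 1) = x 1 := by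
      rw [hxsucc k, e0, hxsucc 0]
    rw [hD]; simp only [e0, e1]
  have := hanti hk
  rw [hDk] at this
  exact lt_irrefl _ this
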